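/- Suppose there exist two events X₀, Y₀ ∈ Σ with dom(X₀) ∩ dom(Y₀) = ∅. Then dom(∅) = ∅ and dom(Ω) = ∅. -/
import Mathlib

open Set

/-- If there are two events `X₀`, `Y₀` with disjoint domains, then the empty event and
the whole history space `Ω` both have empty domain.  Properties (ii) and (iii) of the
least-domain-of-decidability function `dom` are assumed. -/
theorem stmt3 {Ω S : Type*} [MeasurableSpace Ω] (dom : Set Ω → Set S)
    (prop_ii : ∀ (Λ : Set (Set Ω)) (D : Set S), Λ.Countable →
      (∀ X ∈ Λ, MeasurableSet X) → (∀ X ∈ Λ, dom X = D) → dom (⋂₀ Λ) ⊆ D)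
    (prop_iii : ∀ X : Set Ω, MeasurableSet X → dom Xᶜ = dom X)
    (X₀ Y₀ : Set Ω) (hX₀ : MeasurableSet X₀) (hY₀ : MeasurableSet Y₀)
    (hdisj : dom X₀ ∩ dom Y₀ = ∅) :
    dom (∅ : Set Ω) = ∅ ∧ dom (univ : Set Ω) = ∅ := by
  have key : ∀ X : Set Ω, MeasurableSet X → dom (∅ : Set Ω) ⊆ dom X := by
    intro X hX
    have hΛ : ⋂₀ ({X, Xᶜ} : Set (Set Ω)) = (∅ : Set Ω) := by
      simp [sInter_insert]
    have := prop_ii {X, Xᶜ} (dom X) ((Set.countable_singleton _).insert _)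
      (by rintro Y (rfl | rfl); exacts [hX, hX.compl])
      (by rintro Y (rfl | rfl); exacts [rfl, prop_iii X hX])
    rwa [hΛ] at this
  have hemp : dom (∅ : Set Ω) = ∅ := by
    have := subset_inter (key X₀ hX₀) (key Y₀ hY₀)
    rw [hdisj] at this
    exact subset_empty_iff.mp this
  refine ⟨hemp, ?_⟩
  have := prop_iii (∅ : Set Ω) MeasurableSet.empty
  rwa [compl_empty, hemp] at this
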